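/- arXiv:1306.3777 — 3 statements merged into one kernel-verified Lean document; each statement's English description precedes it below -/
import Mathlib

section
/- Let $\tau$ be an injective primitive uniform aperiodic substitution of length $m$ with fixed point $x \in A^{\mathbb{N}}$. Suppose that for every residue $h \in [1, m-1]$, every word that occurs in $x$ at some position $\equiv 0 \pmod m$ also occurs in $x$ at some position $\equiv h \pmod m$. Then for every $K \ge 2$ there exists a nonempty word $u$ with $u^K$ occurring in $x$. -/
open Filter Topology

section Defs

variable {A : Type*} {B : Type*} {C : Type*}

/-- The one-sided shift map. -/
def shift (x : ℕ → A) : ℕ → A := fun n => x (n + 1)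

/-- A (one-sided) subshift: a closed, shift-invariant set of configurations. -/
def Subshift [TopologicalSpace A] (X : Set (ℕ → A)) : Prop :=
  IsClosed X ∧ ∀ x ∈ X, shift x ∈ X

/-- `X` is uniformly recurrent: every pattern occurring in `X` occurs in every
sufficiently long window of every point of `X`. -/
def UniformlyRecurrent (X : Set (ℕ → A)) : Prop :=
  ∀ x ∈ X, ∀ l : ℕ, ∃ N : ℕ, ∀ y ∈ X, ∃ i < N, ∀ k < l, y (i + k) = x k

/-- A block map: a continuous shift-commuting map. -/
def BlockMap [TopologicalSpace A] [TopologicalSpace B] (X : Set (ℕ → A)) (Y : Set (ℕ → B))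
    (f : (ℕ → A) → (ℕ → B)) : Prop :=
  Set.MapsTo f X Y ∧ ContinuousOn f X ∧ ∀ x ∈ X, f (shift x) = shift (f x)

/-- `s` is a cocycle for `Φ` on `X`: `Φ (σ x) = σ^(s x) (Φ x)`. -/
def IsCocycle (X : Set (ℕ → A)) (Φ : (ℕ → A) → (ℕ → B)) (s : (ℕ → A) → ℕ) : Prop :=
  ∀ x ∈ X, ∀ n : ℕ, Φ (shift x) n = Φ x (n + s x)

/-- A dill map: a continuous map with a continuous cocycle which is nontrivial
along every orbit. -/
def DillMap [TopologicalSpace A] [TopologicalSpace B] (X : Set (ℕ → A)) (Y : Set (ℕ → B))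
    (Φ : (ℕ → A) → (ℕ → B)) : Prop :=
  Set.MapsTo Φ X Y ∧ ContinuousOn Φ X ∧
    ∃ s : (ℕ → A) → ℕ, ContinuousOn s X ∧ IsCocycle X Φ s ∧
      ∀ x ∈ X, ∃ n : ℕ, 0 < s (shift^[n] x)

/-- Continuity (local constancy) of a word-valued function on `X`. -/
def WordContinuousOn (φ : (ℕ → A) → List B) (X : Set (ℕ → A)) : Prop :=
  ∀ x ∈ X, ∃ R : ℕ, ∀ y ∈ X, (∀ k ≤ R, y k = x k) → φ y = φ x

/-- `φ` is an implementation of `Φ` on `X`: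
`Φ x = φ x ++ φ (σ x) ++ φ (σ² x) ++ ⋯`, expressed coordinatewise. -/
def IsImplementation (X : Set (ℕ → A)) (Φ : (ℕ → A) → (ℕ → B))
    (φ : (ℕ → A) → List B) : Prop :=
  WordContinuousOn φ X ∧ ∀ x ∈ X, ∀ n : ℕ,
    Φ x n = if h : n < (φ x).length then (φ x).get ⟨n, h⟩
            else Φ (shift x) (n - (φ x).length)

/-- `ⁿφ(x) = φ(x) φ(σ x) ⋯ φ(σ^(n-1) x)`. -/
def iterWord (φ : (ℕ → A) → List B) (x : ℕ → A) : ℕ → List B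
  | 0 => []
  | n + 1 => iterWord φ x n ++ φ (shift^[n] x)

/-- The invariant `Z`: `|ⁿφ(x)|/n → lam` for every `x ∈ X`. -/
def HasZ (X : Set (ℕ → A)) (φ : (ℕ → A) → List B) (lam : ℝ) : Prop :=
  ∀ x ∈ X, Tendsto (fun n : ℕ => ((iterWord φ x n).length : ℝ) / n) atTop (𝓝 lam)

/-- `D` is a deviation bound: `| |ⁿφ(x)| - lam·n | ≤ D` for all `x ∈ X`, `n`. -/
def HasDBound (X : Set (ℕ → A)) (φ : (ℕ → A) → List B) (lam D : ℝ) : Prop :=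
  ∀ x ∈ X, ∀ n : ℕ, |((iterWord φ x n).length : ℝ) - lam * n| ≤ D

/-- `R` is an in-radius bound for `φ` on `X`: `φ x` only depends on `x_[0,R]`. -/
def HasInRadius (X : Set (ℕ → A)) (φ : (ℕ → A) → List B) (R : ℕ) : Prop :=
  ∀ x ∈ X, ∀ y ∈ X, (∀ k ≤ R, x k = y k) → φ x = φ y

/-- Almost equivalence: images of every point agree up to shifts. -/
def AlmostEquiv (X : Set (ℕ → A)) (Φ Ψ : (ℕ → A) → (ℕ → B)) : Prop :=
  ∀ x ∈ X, ∃ i j : ℕ, shift^[i] (Φ x) = shift^[j] (Ψ x)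

/-- The implementation of the composition of two dill maps. -/
def compImpl (φ₁ : (ℕ → A) → List B) (Φ₁ : (ℕ → A) → (ℕ → B))
    (φ₂ : (ℕ → B) → List C) (x : ℕ → A) : List C :=
  iterWord φ₂ (Φ₁ x) (φ₁ x).length

/-- Extension of a substitution to words. -/
def wordApply (τ : A → List A) (w : List A) : List A := (w.map τ).flatten

/-- Iterated image `τⁿ(a)` of a letter. -/
def subPow (τ : A → List A) : ℕ → A → List A
  | 0, a => [a]
  | n + 1, a => wordApply τ (subPow τ n a)

/-- The language of the substitution `τ`: infixes of the `τⁿ(a)`. -/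
def InLanguage (τ : A → List A) (w : List A) : Prop :=
  ∃ a n, w <:+: subPow τ n a

/-- The one-sided subshift of the substitution `τ`. -/
def Xsub (τ : A → List A) : Set (ℕ → A) :=
  {x | ∀ i l : ℕ, InLanguage τ (List.ofFn fun k : Fin l => x (i + k))}

/-- Primitivity of a substitution. -/
def Primitive (τ : A → List A) : Prop :=
  ∃ N, ∀ n ≥ N, ∀ a b : A, a ∈ subPow τ n b

/-- The word `w` occurs in `x` at position `i`. -/
def occursAt (w : List A) (x : ℕ → A) (i : ℕ) : Prop :=
  w = List.ofFn fun k : Fin w.length => x (i + k)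

/-- The action of a (non-erasing) substitution on one-sided configurations. -/
def subApply [Inhabited A] (τ : A → List A) (x : ℕ → A) : ℕ → A :=
  fun n => (wordApply τ (List.ofFn fun k : Fin (n + 1) => x k)).getD n default

end Defs

section MyHelpers

variable {A : Type*}

theorem my_occursAt_of_forall {w : List A} {x : ℕ → A} {i : ℕ}
    (h : ∀ t (ht : t < w.length), w[t] = x (i + t)) : occursAt w x i := by
  unfold occursAt
  apply List.ext_getElem
  · simp
  · intro t h1 h2
    rw [List.getElem_ofFn]
    exact h t h1

theorem my_occursAt_getElem {w : List A} {x : ℕ → A} {i : ℕ} (h : occursAt w x i)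
    {t : ℕ} (ht : t < w.length) : w[t] = x (i + t) := by
  rw [List.getElem_of_eq h ht, List.getElem_ofFn]

theorem my_occursAt_mk (x : ℕ → A) (i l : ℕ) :
    occursAt (List.ofFn fun k : Fin l => x (i + k)) x i := by
  apply my_occursAt_of_forall
  intro t ht
  rw [List.getElem_ofFn]

theorem my_occursAt_append {u v : List A} {x : ℕ → A} {P : ℕ}
    (h1 : occursAt u x P) (h2 : occursAt v x (P + u.length)) :
    occursAt (u ++ v) x P := by
  apply my_occursAt_of_forall
  intro t ht
  rw [List.length_append] at ht
  by_cases h : t < u.length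
  · rw [List.getElem_append_left h]
    exact my_occursAt_getElem h1 h
  · rw [List.getElem_append_right (Nat.le_of_not_lt h)]
    have := my_occursAt_getElem h2 (t := t - u.length) (by omega)
    rw [this]
    congr 1
    omega

theorem my_occursAt_tail {a : A} {v : List A} {x : ℕ → A} {q : ℕ}
    (h : occursAt (a :: v) x q) : a = x q ∧ occursAt v x (q + 1) := by
  constructor
  · have := my_occursAt_getElem h (t := 0) (by simp)
    simpa using this
  · apply my_occursAt_of_forall
    intro t ht
    have := my_occursAt_getElem h (t := t + 1) (by simp; omega)
    rw [List.getElem_cons_succ] at this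
    rw [this]
    congr 1
    omega

theorem my_length_wordApply (τ : A → List A) {m : ℕ} (huni : ∀ a, (τ a).length = m)
    (w : List A) : (wordApply τ w).length = m * w.length := by
  induction w with
  | nil => simp [wordApply]
  | cons a w ih =>
    have : wordApply τ (a :: w) = τ a ++ wordApply τ w := by simp [wordApply]
    rw [this, List.length_append, ih, huni, List.length_cons, Nat.mul_succ]
    omega

theorem my_length_subPow (τ : A → List A) {m : ℕ} (huni : ∀ a, (τ a).length = m)
    (k : ℕ) (a : A) : (subPow τ k a).length = m ^ k := by
  induction k with
  | zero => simp [subPow]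
  | succ k ih =>
    show (wordApply τ (subPow τ k a)).length = m ^ (k + 1)
    rw [my_length_wordApply τ huni, ih, pow_succ]
    ring

theorem my_wordApply_occ (τ : A → List A) {m : ℕ} (huni : ∀ a, (τ a).length = m)
    {x : ℕ → A} (hfix : ∀ n : ℕ, occursAt (τ (x n)) x (m * n)) :
    ∀ (v : List A) (q : ℕ), occursAt v x q → occursAt (wordApply τ v) x (m * q) := by
  intro v
  induction v with
  | nil =>
    intro q _
    apply my_occursAt_of_forall
    intro t ht
    simp [wordApply] at ht
  | cons a v ih =>
    intro q h
    obtain ⟨ha, htail⟩ := my_occursAt_tail h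
    have he : wordApply τ (a :: v) = τ a ++ wordApply τ v := by simp [wordApply]
    rw [he]
    apply my_occursAt_append
    · rw [ha]; exact hfix q
    · rw [huni]
      have := ih (q + 1) htail
      rwa [Nat.mul_succ] at this

def wpow (τ : A → List A) : ℕ → List A → List A
  | 0, v => v
  | n + 1, v => wordApply τ (wpow τ n v)

theorem my_length_wpow (τ : A → List A) {m : ℕ} (huni : ∀ a, (τ a).length = m)
    (n : ℕ) (v : List A) : (wpow τ n v).length = m ^ n * v.length := by
  induction n with
  | zero => simp [wpow]
  | succ n ih =>
    show (wordApply τ (wpow τ n v)).length = m ^ (n + 1) * v.length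
    rw [my_length_wordApply τ huni, ih, pow_succ]
    ring

theorem my_wpow_occ (τ : A → List A) {m : ℕ} (huni : ∀ a, (τ a).length = m)
    {x : ℕ → A} (hfix : ∀ n : ℕ, occursAt (τ (x n)) x (m * n)) (n : ℕ)
    (v : List A) (q : ℕ) (h : occursAt v x q) :
    occursAt (wpow τ n v) x (m ^ n * q) := by
  induction n with
  | zero => simpa [wpow] using h
  | succ n ih =>
    have h2 := my_wordApply_occ τ huni hfix _ _ ih
    have h3 : m ^ (n + 1) * q = m * (m ^ n * q) := by ring
    rw [h3]
    exact h2

theorem my_pow_occ {x : ℕ → A} (u : List A) :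
    ∀ (k : ℕ) (Q : ℕ), (∀ i, i < k → occursAt u x (Q + i * u.length)) →
      occursAt (List.flatten (List.replicate k u)) x Q := by
  intro k
  induction k with
  | zero =>
    intro Q _
    apply my_occursAt_of_forall
    intro t ht
    simp at ht
  | succ k ih =>
    intro Q hocc
    have he : List.replicate (k + 1) u = u :: List.replicate k u := rfl
    rw [he, List.flatten_cons]
    apply my_occursAt_append
    · simpa using hocc 0 (by omega)
    · apply ih
      intro i hi
      have := hocc (i + 1) (by omega)
      rwa [show Q + (i + 1) * u.length = Q + u.length + i * u.length by ring] at this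

end MyHelpers
section MyClaims

variable {A : Type*}

theorem my_claim1 (τ : A → List A) (m : ℕ) (hm : 2 ≤ m) {x : ℕ → A}
    (hmod : ∀ h : ℕ, 0 < h → h < m → ∀ w : List A,
      (∃ i : ℕ, i % m = 0 ∧ occursAt w x i) →
      ∃ j : ℕ, j % m = h ∧ occursAt w x j) :
    ∀ (w : List A) (i s : ℕ), s < m → occursAt w x i →
      ∃ j, j % m = s ∧ occursAt w x j := by
  intro w i s hs hocc
  have step1 : ∃ i0, i0 % m = 0 ∧ occursAt w x i0 := by
    by_cases hr : i % m = 0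
    · exact ⟨i, hr, hocc⟩
    · set r := i % m with hrdef
      have hrm : r < m := Nat.mod_lt _ (by omega)
      set q := i / m with hq2
      have hiq : m * q + r = i := Nat.div_add_mod i m
      set W := List.ofFn (fun t : Fin (r + w.length) => x (m * q + t)) with hW
      have hWocc : occursAt W x (m * q) := my_occursAt_mk x (m * q) _
      have hWlen : W.length = r + w.length := by simp [hW]
      obtain ⟨j2, hj2, hj2occ⟩ := hmod (m - r) (by omega) (by omega) W
        ⟨m * q, Nat.mul_mod_right m q, hWocc⟩
      refine ⟨j2 + r, ?_, ?_⟩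
      · have hd : m * (j2 / m) + (m - r) = j2 := by
          have := Nat.div_add_mod j2 m
          omega
        have he : j2 + r = m * (j2 / m + 1) := by
          rw [Nat.mul_add, Nat.mul_one]
          omega
        rw [he, Nat.mul_mod_right]
      · apply my_occursAt_of_forall
        intro t ht
        calc w[t] = x (i + t) := my_occursAt_getElem hocc ht
          _ = x (m * q + (r + t)) := by congr 1; omega
          _ = W[r + t]'(by rw [hWlen]; omega) :=
            (my_occursAt_getElem hWocc (by rw [hWlen]; omega)).symm
          _ = x (j2 + (r + t)) := my_occursAt_getElem hj2occ (by rw [hWlen]; omega)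
          _ = x (j2 + r + t) := by congr 1; omega
  obtain ⟨i0, hi0, hocc0⟩ := step1
  by_cases hs0 : s = 0
  · exact ⟨i0, by rw [hi0, hs0], hocc0⟩
  · exact hmod s (by omega) hs w ⟨i0, hi0, hocc0⟩

theorem my_claimN (τ : A → List A) (m : ℕ) (hm : 2 ≤ m)
    (huni : ∀ a, (τ a).length = m) {x : ℕ → A}
    (hfix : ∀ n : ℕ, occursAt (τ (x n)) x (m * n))
    (hmod : ∀ h : ℕ, 0 < h → h < m → ∀ w : List A,
      (∃ i : ℕ, i % m = 0 ∧ occursAt w x i) →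
      ∃ j : ℕ, j % m = h ∧ occursAt w x j) :
    ∀ (n : ℕ) (w : List A) (i s : ℕ), s < m ^ n → occursAt w x i →
      ∃ j, j % m ^ n = s ∧ occursAt w x j := by
  intro n
  induction n with
  | zero =>
    intro w i s hs hocc
    rw [pow_zero] at hs
    exact ⟨i, by rw [pow_zero]; omega, hocc⟩
  | succ n ih =>
    intro w i s hs hocc
    set s0 := s % m with hs0def
    set s1 := s / m with hs1def
    have hs0 : s0 < m := Nat.mod_lt _ (by omega)
    have hse : m * s1 + s0 = s := Nat.div_add_mod s m
    have hs1 : s1 < m ^ n := by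
      apply Nat.div_lt_of_lt_mul
      rw [← pow_succ']
      exact hs
    obtain ⟨j1, hj1, hocc1⟩ := my_claim1 τ m hm hmod w i s0 hs0 hocc
    set q := j1 / m with hqdef
    have hj1eq : j1 = m * q + s0 := by
      have h5 := Nat.div_add_mod j1 m
      rw [← hqdef] at h5
      omega
    set l := w.length + 1 with hldef
    set v := List.ofFn (fun t : Fin l => x (q + t)) with hv
    have hvocc : occursAt v x q := my_occursAt_mk x q l
    have hvlen : v.length = l := by simp [hv, hldef]
    obtain ⟨p, hp, hpocc⟩ := ih v q s1 hs1 hvocc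
    have hWq : occursAt (wordApply τ v) x (m * q) := my_wordApply_occ τ huni hfix v q hvocc
    have hWp : occursAt (wordApply τ v) x (m * p) := my_wordApply_occ τ huni hfix v p hpocc
    have hWlen : (wordApply τ v).length = m * l := by
      rw [my_length_wordApply τ huni, hvlen]
    have hidx : ∀ t, t < w.length → s0 + t < (wordApply τ v).length := by
      intro t ht
      rw [hWlen, hldef, Nat.mul_succ]
      have : w.length ≤ m * w.length := Nat.le_mul_of_pos_left _ (by omega)
      omega
    refine ⟨m * p + s0, ?_, ?_⟩
    · obtain ⟨b, hb⟩ : ∃ b, p = m ^ n * b + s1 :=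
        ⟨p / m ^ n, by have := Nat.div_add_mod p (m ^ n); omega⟩
      have key : m * p + s0 = m ^ (n + 1) * b + s := by
        rw [hb, ← hse]
        ring
      rw [key, Nat.mul_add_mod]
      exact Nat.mod_eq_of_lt hs
    · apply my_occursAt_of_forall
      intro t ht
      calc w[t] = x (j1 + t) := my_occursAt_getElem hocc1 ht
        _ = x (m * q + (s0 + t)) := by congr 1; omega
        _ = (wordApply τ v)[s0 + t]'(hidx t ht) :=
          (my_occursAt_getElem hWq (hidx t ht)).symm
        _ = x (m * p + (s0 + t)) := my_occursAt_getElem hWp (hidx t ht)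
        _ = x (m * p + s0 + t) := by congr 1; omega

end MyClaims

/-- if every `0 mod m`-factor of the fixed point of an injective
primitive uniform aperiodic substitution is also an `h mod m`-factor for each
`h ∈ [1, m-1]`, then the fixed point contains arbitrarily high powers. -/
theorem stmt13 {A : Type*} [Fintype A] [DecidableEq A]
    (τ : A → List A) (m : ℕ)
    (huni : ∀ a : A, (τ a).length = m) (hinj : Function.Injective τ)
    (hprim : Primitive τ)
    (haper : ∀ y ∈ Xsub τ, ∀ p : ℕ, 0 < p → shift^[p] y ≠ y)
    (x : ℕ → A) (hx : x ∈ Xsub τ)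
    (hfix : ∀ n : ℕ, occursAt (τ (x n)) x (m * n))
    (hmod : ∀ h : ℕ, 0 < h → h < m → ∀ w : List A,
      (∃ i : ℕ, i % m = 0 ∧ occursAt w x i) →
      ∃ j : ℕ, j % m = h ∧ occursAt w x j) :
    ∀ K : ℕ, 2 ≤ K → ∃ u : List A, u ≠ [] ∧
      ∃ i : ℕ, occursAt (List.flatten (List.replicate K u)) x i := by
  intro K hK
  -- the alphabet size is at least 2
  have hm : 2 ≤ m := by
    by_contra hc
    obtain ⟨a, k, hinf⟩ := hx 0 2
    have hlen := hinf.length_le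
    rw [my_length_subPow τ huni k a] at hlen
    simp only [List.length_ofFn] at hlen
    have h1 : m ^ k ≤ 1 ^ k := Nat.pow_le_pow_left (by omega) k
    rw [one_pow] at h1
    omega
  have hm0 : 0 < m := by omega
  set cA := Fintype.card A with hcA
  set J := K + 1 with hJdef
  set n := J + (cA ^ 2 + 1) with hndef
  have hmJpos : 0 < m ^ J := pow_pos hm0 J
  have hMpos : 0 < m ^ n := pow_pos hm0 n
  have hJl : K + 1 ≤ m ^ J := by
    have h1 : K + 1 < 2 ^ (K + 1) := Nat.lt_two_pow_self (n := K + 1)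
    have h2 : (2 : ℕ) ^ (K + 1) ≤ m ^ (K + 1) := Nat.pow_le_pow_left hm (K + 1)
    rw [hJdef]
    omega
  have hcard : cA ^ 2 * m ^ J < m ^ n := by
    have h1 : cA ^ 2 < 2 ^ (cA ^ 2 + 1) := by
      have h0 := Nat.lt_two_pow_self (n := cA ^ 2)
      have h2 : (2 : ℕ) ^ (cA ^ 2) ≤ 2 ^ (cA ^ 2 + 1) :=
        Nat.pow_le_pow_right (by omega) (by omega)
      omega
    have h2 : cA ^ 2 < m ^ (cA ^ 2 + 1) :=
      lt_of_lt_of_le h1 (Nat.pow_le_pow_left hm _)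
    have h3 : cA ^ 2 * m ^ J < m ^ (cA ^ 2 + 1) * m ^ J :=
      mul_lt_mul_of_pos_right h2 hmJpos
    have h4 : m ^ (cA ^ 2 + 1) * m ^ J = m ^ n := by
      rw [hndef, pow_add]
      ring
    omega
  set L := K * m ^ n with hLdef
  set w := List.ofFn (fun t : Fin L => x (0 + t)) with hwdef
  have hwocc : occursAt w x 0 := my_occursAt_mk x 0 L
  have hwlen : w.length = L := by simp [hwdef]
  have Hocc : ∀ h : Fin (m ^ n), ∃ j, j % m ^ n = h.val ∧ occursAt w x j := fun h =>
    my_claimN τ m hm huni hfix hmod n w 0 h.val h.isLt hwocc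
  choose j hjmod hjocc using Hocc
  set q : Fin (m ^ n) → ℕ := fun h => j h / m ^ n with hqdef
  have hjeq : ∀ h : Fin (m ^ n), j h = m ^ n * q h + h.val := by
    intro h
    have h5 := Nat.div_add_mod (j h) (m ^ n)
    have h6 : q h = j h / m ^ n := rfl
    rw [← h6, hjmod h] at h5
    omega
  set E : Fin (m ^ n) → A × A × Fin (m ^ J) := fun h =>
    (x (q h / m ^ J), x (q h / m ^ J + 1), ⟨q h % m ^ J, Nat.mod_lt _ hmJpos⟩) with hEdef
  have hclt : Fintype.card (A × A × Fin (m ^ J)) < Fintype.card (Fin (m ^ n)) := by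
    rw [Fintype.card_prod, Fintype.card_prod, Fintype.card_fin, Fintype.card_fin]
    have h7 : Fintype.card A * (Fintype.card A * m ^ J) = cA ^ 2 * m ^ J := by
      rw [hcA]; ring
    omega
  obtain ⟨g1, g2, hgne, hgeq⟩ := Fintype.exists_ne_map_eq_of_card_lt E hclt
  have main : ∀ g g' : Fin (m ^ n), g.val < g'.val → E g = E g' →
      ∃ u : List A, u ≠ [] ∧ ∃ i : ℕ,
        occursAt (List.flatten (List.replicate K u)) x i := by
    intro g g' hlt hEq
    have hx1 : x (q g / m ^ J) = x (q g' / m ^ J) := congrArg Prod.fst hEq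
    have hx2 : x (q g / m ^ J + 1) = x (q g' / m ^ J + 1) :=
      congrArg (fun p => p.2.1) hEq
    have ho : q g % m ^ J = q g' % m ^ J :=
      congrArg (fun p => (p.2.2 : Fin (m ^ J)).val) hEq
    have pairocc : ∀ c : ℕ, occursAt [x c, x (c + 1)] x c := by
      intro c
      apply my_occursAt_of_forall
      intro t ht
      simp only [List.length_cons, List.length_nil] at ht
      interval_cases t
      · simp
      · simp
    have hpair : [x (q g / m ^ J), x (q g / m ^ J + 1)]
        = [x (q g' / m ^ J), x (q g' / m ^ J + 1)] := by rw [hx1, hx2]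
    have hblk : ∀ gg : Fin (m ^ n), ∀ u : ℕ, ∀ hu : u < m ^ J * 2,
        x (m ^ J * (q gg / m ^ J) + u) =
          (wpow τ J [x (q gg / m ^ J), x (q gg / m ^ J + 1)])[u]'(by
            rw [my_length_wpow τ huni]
            simpa using hu) := by
      intro gg u hu
      have hocc2 := my_wpow_occ τ huni hfix J _ _ (pairocc (q gg / m ^ J))
      exact (my_occursAt_getElem hocc2 (by rw [my_length_wpow τ huni]; simpa using hu)).symm
    have LFact : ∀ t, t < K + 1 → x (q g + t) = x (q g' + t) := by
      intro t ht
      set co := q g % m ^ J with hco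
      have h7 : co < m ^ J := Nat.mod_lt _ hmJpos
      have hb : co + t < m ^ J * 2 := by omega
      have A1 := hblk g (co + t) hb
      have A2 := hblk g' (co + t) hb
      have A3 := List.getElem_of_eq (congrArg (wpow τ J) hpair)
        (show co + t < (wpow τ J [x (q g / m ^ J), x (q g / m ^ J + 1)]).length by
          rw [my_length_wpow τ huni]; simpa using hb)
      have e1 : m ^ J * (q g / m ^ J) + co = q g := Nat.div_add_mod _ _
      have e2 : m ^ J * (q g' / m ^ J) + q g' % m ^ J = q g' := Nat.div_add_mod _ _
      calc x (q g + t) = x (m ^ J * (q g / m ^ J) + (co + t)) := by congr 1; omega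
        _ = x (m ^ J * (q g' / m ^ J) + (co + t)) := by rw [A1, A3, ← A2]
        _ = x (q g' + t) := by congr 1; omega
    set v := List.ofFn (fun t : Fin (K + 1) => x (q g + t)) with hvdef
    set v' := List.ofFn (fun t : Fin (K + 1) => x (q g' + t)) with hv'def
    have hvv : v = v' := by
      rw [hvdef, hv'def]
      congr 1
      funext t
      exact LFact t t.isLt
    have hvocc : occursAt v x (q g) := my_occursAt_mk x (q g) (K + 1)
    have hv'occ : occursAt v' x (q g') := my_occursAt_mk x (q g') (K + 1)
    have hWg : occursAt (wpow τ n v) x (m ^ n * q g) :=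
      my_wpow_occ τ huni hfix n v (q g) hvocc
    have hWg' : occursAt (wpow τ n v) x (m ^ n * q g') := by
      rw [hvv]
      exact my_wpow_occ τ huni hfix n v' (q g') hv'occ
    have hWl : (wpow τ n v).length = m ^ n * (K + 1) := by
      rw [my_length_wpow τ huni, hvdef]
      simp
    set P := m ^ n * q g + g.val with hPdef
    set d := g'.val - g.val with hddef
    have hd : g.val + d = g'.val := by omega
    have hdpos : 0 < d := by omega
    have hdM : d < m ^ n := by
      have := g'.isLt
      omega
    have PER : ∀ t, t < L → x (P + t) = x (P + d + t) := by
      intro t ht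
      have hbound : g'.val + t < (wpow τ n v).length := by
        rw [hWl]
        have h9 : m ^ n * (K + 1) = K * m ^ n + m ^ n := by ring
        have := g'.isLt
        omega
      have bw : t < w.length := by rw [hwlen]; exact ht
      have w1 : w[t]'bw = x (j g + t) := my_occursAt_getElem (hjocc g) bw
      have w2 : w[t]'bw = x (j g' + t) := my_occursAt_getElem (hjocc g') bw
      have w3 : (wpow τ n v)[g'.val + t]'hbound = x (m ^ n * q g' + (g'.val + t)) :=
        my_occursAt_getElem hWg' hbound
      have w4 : (wpow τ n v)[g'.val + t]'hbound = x (m ^ n * q g + (g'.val + t)) :=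
        my_occursAt_getElem hWg hbound
      calc x (P + t) = x (j g + t) := by rw [hjeq g, ← hPdef]
        _ = x (j g' + t) := by rw [← w1, w2]
        _ = x (m ^ n * q g' + (g'.val + t)) := by rw [hjeq g']; congr 1; omega
        _ = x (m ^ n * q g + (g'.val + t)) := by rw [← w3, w4]
        _ = x (P + d + t) := by congr 1; omega
    have hKd : K * d < L := by
      have h8 : K * (d + 1) ≤ K * m ^ n := Nat.mul_le_mul (le_refl K) (by omega)
      rw [Nat.mul_add, Nat.mul_one] at h8
      omega
    have PERi : ∀ i, i ≤ K → ∀ t, t < d → x (P + (i * d + t)) = x (P + t) := by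
      intro i
      induction i with
      | zero => intro _ t _; norm_num
      | succ i ih =>
        intro hiK t ht
        have h2 : (i + 1) * d ≤ K * d := Nat.mul_le_mul (by omega) (le_refl d)
        have h1 : i * d + t < L := by
          rw [Nat.succ_mul] at h2
          omega
        have h3 := PER (i * d + t) h1
        have h4 : x (P + ((i + 1) * d + t)) = x (P + d + (i * d + t)) := by
          congr 1
          rw [Nat.succ_mul]
          omega
        rw [h4, ← h3]
        exact ih (by omega) t ht
    set u := List.ofFn (fun t : Fin d => x (P + t)) with hudef
    have hulen : u.length = d := by simp [hudef]
    have hune : u ≠ [] := List.ne_nil_of_length_pos (by rw [hulen]; omega)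
    have hui : ∀ i, i < K → occursAt u x (P + i * u.length) := by
      intro i hi
      apply my_occursAt_of_forall
      intro t ht
      have ht' : t < d := by rw [hulen] at ht; exact ht
      have e5 : u[t]'ht = x (P + t) := by
        rw [List.getElem_of_eq hudef ht, List.getElem_ofFn]
      rw [e5, hulen, ← PERi i (by omega) t ht']
      congr 1
      omega
    exact ⟨u, hune, P, my_pow_occ u K P hui⟩
  have hne' : g1.val ≠ g2.val := fun hh => hgne (Fin.ext hh)
  rcases Nat.lt_or_ge g1.val g2.val with hlt | hge
  · exact main g1 g2 hlt hgeq
  · exact main g2 g1 (by omega) hgeq.symm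
end

section
/- Let $\tau$ be a recognizable injective uniform primitive aperiodic substitution of length $m$ on its two-sided subshift $X_\tau^{\leftrightarrow}$, with the partition $X_\tau^{\leftrightarrow} = \bigsqcup_{p=0}^{m-1} X^p$ where $X^0 = \tau(X_\tau^{\leftrightarrow})$ and $X^p = \sigma^p(X^0)$. Then for every block map $f : X_\tau^{\leftrightarrow} \to X_\tau^{\leftrightarrow}$ there exists $p \in [0, m-1]$ such that $f(X^0) \subset X^p$. -/
open Filter Topology

section TwoSided

variable {A : Type*} {B : Type*}

/-- The two-sided shift map. -/
def shiftZ (x : ℤ → A) : ℤ → A := fun n => x (n + 1)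

/-- The power `σ^k` of the two-sided shift, for `k : ℤ`. -/
def shiftZk (k : ℤ) (x : ℤ → A) : ℤ → A := fun n => x (n + k)

/-- The action of a uniform substitution of length `m` on two-sided configurations. -/
def subApplyZ [Inhabited A] (τ : A → List A) (m : ℕ) (x : ℤ → A) : ℤ → A :=
  fun i => (τ (x (Int.fdiv i m))).getD (Int.fmod i m).toNat default

/-- The two-sided subshift of the substitution `τ`. -/
def XsubZ (τ : A → List A) : Set (ℤ → A) :=
  {x | ∀ (i : ℤ) (l : ℕ), InLanguage τ (List.ofFn fun k : Fin l => x (i + k))}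

/-- A block map between two-sided subshifts. -/
def BlockMapZ [TopologicalSpace A] [TopologicalSpace B] (X : Set (ℤ → A)) (Y : Set (ℤ → B))
    (f : (ℤ → A) → (ℤ → B)) : Prop :=
  Set.MapsTo f X Y ∧ ContinuousOn f X ∧ ∀ x ∈ X, f (shiftZ x) = shiftZ (f x)

/-- Uniform recurrence for two-sided subshifts. -/
def URZ (X : Set (ℤ → A)) : Prop :=
  ∀ x ∈ X, ∀ l : ℕ, ∃ N : ℕ, ∀ y ∈ X, ∃ i : ℤ, 0 ≤ i ∧ i < N ∧
    ∀ k : ℕ, k < l → y (i + k) = x k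

end TwoSided

/-- The (discrete) topology on `Option A`, i.e. on the alphabet `A ∪ {#}`. -/
instance optionTopology {A : Type*} [TopologicalSpace A] : TopologicalSpace (Option A) := ⊥


section AuxLemmas

lemma aux_mem_shiftZk {A : Type*} {τ : A → List A} {x : ℤ → A} (hx : x ∈ XsubZ τ) (j : ℤ) :
    shiftZk j x ∈ XsubZ τ := by
  simp only [XsubZ, Set.mem_setOf_eq] at hx ⊢
  intro i l
  have h : (List.ofFn fun k : Fin l => shiftZk j x (i + (k : ℕ))) =
      List.ofFn fun k : Fin l => x ((i + j) + (k : ℕ)) := by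
    apply congrArg; funext k
    exact congrArg x (by ring)
  rw [h]; exact hx (i + j) l

lemma aux_iter {A : Type*} (n : ℕ) (x : ℤ → A) (k : ℤ) : (shiftZ^[n] x) k = x (k + n) := by
  induction n generalizing x with
  | zero => simp
  | succ n ih =>
    rw [Function.iterate_succ_apply, ih (shiftZ x)]
    exact congrArg x (by push_cast; ring)

lemma locConst {A C : Type*} [TopologicalSpace A] [DiscreteTopology A]
    [TopologicalSpace C] [DiscreteTopology C]
    (X : Set (ℤ → A)) (F : (ℤ → A) → C) (hF : ContinuousOn F X) {x : ℤ → A} (hx : x ∈ X) :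
    ∃ l : ℕ, ∀ y ∈ X, (∀ k : ℤ, k.natAbs ≤ l → y k = x k) → F y = F x := by
  have h1 : F ⁻¹' {F x} ∈ nhdsWithin x X :=
    hF x hx ((isOpen_discrete {F x}).mem_nhds rfl)
  rw [mem_nhdsWithin] at h1
  obtain ⟨U, hUopen, hxU, hU⟩ := h1
  have hU' : U ∈ nhds x := hUopen.mem_nhds hxU
  rw [nhds_pi, Filter.mem_pi] at hU'
  obtain ⟨I, hIfin, t, ht, hIt⟩ := hU'
  obtain ⟨l, hl⟩ := (hIfin.image Int.natAbs).bddAbove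
  refine ⟨l, fun y hy hagree => ?_⟩
  have hyU : y ∈ U := by
    apply hIt
    intro i hi
    have hti : t i ∈ nhds (x i) := ht i
    rw [nhds_discrete, Filter.mem_pure] at hti
    rw [hagree i (hl (Set.mem_image_of_mem _ hi))]
    exact hti
  have : y ∈ F ⁻¹' {F x} := hU ⟨hyU, hy⟩
  simpa using this

end AuxLemmas

/-- every block map on the two-sided subshift of a recognizable
injective uniform primitive aperiodic substitution maps `X⁰` into a single
period class `X^p`. -/
theorem stmt15 {A : Type*} [Fintype A] [DecidableEq A] [Inhabited A]
    [TopologicalSpace A] [DiscreteTopology A]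
    (τ : A → List A) (m : ℕ) (hm : 0 < m)
    (huni : ∀ a : A, (τ a).length = m) (hinj : Function.Injective τ)
    (hprim : Primitive τ)
    (haper : ∀ y ∈ XsubZ τ, ∀ p : ℕ, 0 < p → shiftZk (p : ℤ) y ≠ y)
    (hUR : URZ (XsubZ τ))
    (hcover : XsubZ τ = ⋃ p ∈ Finset.range m,
      shiftZk (p : ℤ) '' (subApplyZ τ m '' XsubZ τ))
    (hdisj : ∀ p < m, ∀ q < m, p ≠ q →
      Disjoint (shiftZk (p : ℤ) '' (subApplyZ τ m '' XsubZ τ))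
        (shiftZk (q : ℤ) '' (subApplyZ τ m '' XsubZ τ)))
    -- recognizability: the block map `R`, marking exactly the cutting points
    (R : (ℤ → A) → (ℤ → Option A))
    (hRcont : ContinuousOn R (XsubZ τ))
    (hRsh : ∀ x ∈ XsubZ τ, R (shiftZ x) = shiftZ (R x))
    (hR : ∀ p < m, ∀ y ∈ shiftZk (p : ℤ) '' (subApplyZ τ m '' XsubZ τ), ∀ i : ℤ,
      (R y i ≠ none ↔ (i - p) % (m : ℤ) = 0))
    (f : (ℤ → A) → (ℤ → A)) (hf : BlockMapZ (XsubZ τ) (XsubZ τ) f) :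
    ∃ p < m, ∀ y ∈ subApplyZ τ m '' XsubZ τ,
      f y ∈ shiftZk (p : ℤ) '' (subApplyZ τ m '' XsubZ τ) := by
  classical
  haveI : NeZero m := ⟨hm.ne'⟩
  haveI : DiscreteTopology (Option A) := discreteTopology_bot (Option A)
  set X : Set (ℤ → A) := XsubZ τ with hXdef
  set X0 : Set (ℤ → A) := subApplyZ τ m '' XsubZ τ with hX0def
  have hmZ : (0 : ℤ) < m := by exact_mod_cast hm
  have hshift : ∀ {x : ℤ → A}, x ∈ X → ∀ j : ℤ, shiftZk j x ∈ X := fun hx j => aux_mem_shiftZk hx j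
  have hsZ : ∀ {x : ℤ → A}, x ∈ X → shiftZ x ∈ X := by
    intro x hx
    have := hshift hx 1
    have he : shiftZk (1 : ℤ) x = shiftZ x := rfl
    rwa [he] at this
  have hXp_sub : ∀ p, p < m → shiftZk (p : ℤ) '' X0 ⊆ X := by
    intro p hp z hz
    have h : z ∈ ⋃ p ∈ Finset.range m, shiftZk (p : ℤ) '' X0 :=
      Set.mem_biUnion (Finset.mem_range.2 hp) hz
    rwa [← hcover] at h
  have hPex : ∀ z : ℤ → A, ∃ p : ℕ, z ∈ X → p < m ∧ z ∈ shiftZk (p : ℤ) '' X0 := by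
    intro z
    by_cases hz : z ∈ X
    · have hz' := hz
      rw [hcover] at hz'
      simp only [Set.mem_iUnion, Finset.mem_range] at hz'
      obtain ⟨p, hp, hzp⟩ := hz'
      exact ⟨p, fun _ => ⟨hp, hzp⟩⟩
    · exact ⟨0, fun h => absurd h hz⟩
  choose P hP using hPex
  have hPlt : ∀ z ∈ X, P z < m := fun z hz => (hP z hz).1
  have hPmem : ∀ z ∈ X, z ∈ shiftZk ((P z : ℕ) : ℤ) '' X0 := fun z hz => (hP z hz).2
  have hPuniq : ∀ z ∈ X, ∀ p, p < m → z ∈ shiftZk (p : ℤ) '' X0 → P z = p := by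
    intro z hz p hp hzp
    by_contra hne
    exact Set.disjoint_left.1 (hdisj _ (hPlt z hz) _ hp hne) (hPmem z hz) hzp
  -- shift by m on the image of the substitution
  have hsigma_m : ∀ x : ℤ → A, shiftZk (m : ℤ) (subApplyZ τ m x) = subApplyZ τ m (shiftZ x) := by
    intro x
    funext n
    have h1 : (n + (m : ℤ)).fdiv m = n.fdiv m + 1 := by
      rw [Int.fdiv_eq_ediv_of_nonneg _ hmZ.le, Int.fdiv_eq_ediv_of_nonneg _ hmZ.le,
        show n + (m : ℤ) = n + 1 * m by ring, Int.add_mul_ediv_right _ _ hmZ.ne']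
    have h2 : (n + (m : ℤ)).fmod m = n.fmod m := by
      rw [Int.fmod_eq_emod_of_nonneg _ hmZ.le, Int.fmod_eq_emod_of_nonneg _ hmZ.le,
        show n + (m : ℤ) = n + 1 * m by ring, Int.add_mul_emod_self_right]
    simp only [shiftZk, subApplyZ, h1, h2, shiftZ]
  have hstep : ∀ z ∈ X, P (shiftZ z) = (P z + 1) % m := by
    intro z hz
    obtain ⟨w, hw, hzw⟩ := hPmem z hz
    obtain ⟨x, hx, hwx⟩ := hw
    by_cases hcase : P z + 1 < m
    · rw [Nat.mod_eq_of_lt hcase]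
      apply hPuniq _ (hsZ hz) _ hcase
      refine ⟨w, ⟨x, hx, hwx⟩, ?_⟩
      funext n
      calc shiftZk ((P z + 1 : ℕ) : ℤ) w n
          = w ((n + 1) + ((P z : ℕ) : ℤ)) := congrArg w (by push_cast; ring)
        _ = shiftZk ((P z : ℕ) : ℤ) w (n + 1) := rfl
        _ = z (n + 1) := congrFun hzw (n + 1)
        _ = shiftZ z n := rfl
    · have hPm : P z + 1 = m := by have := hPlt z hz; omega
      have hmod : (P z + 1) % m = 0 := by rw [hPm, Nat.mod_self]
      rw [hmod]
      apply hPuniq _ (hsZ hz) 0 hm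
      refine ⟨subApplyZ τ m (shiftZ x), ⟨shiftZ x, hsZ hx, rfl⟩, ?_⟩
      funext n
      calc shiftZk ((0 : ℕ) : ℤ) (subApplyZ τ m (shiftZ x)) n
          = subApplyZ τ m (shiftZ x) n := by simp [shiftZk]
        _ = shiftZk (m : ℤ) (subApplyZ τ m x) n := (congrFun (hsigma_m x) n).symm
        _ = w (n + (m : ℤ)) := congrFun hwx (n + (m : ℤ))
        _ = shiftZk ((P z : ℕ) : ℤ) w (n + 1) := congrArg w (by rw [← hPm]; push_cast; ring)
        _ = z (n + 1) := congrFun hzw (n + 1)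
        _ = shiftZ z n := rfl
  have hstepZ : ∀ z ∈ X, (P (shiftZ z) : ZMod m) = (P z : ZMod m) + 1 := by
    intro z hz
    rw [hstep z hz, ZMod.natCast_mod]
    push_cast
    ring
  have hfX : ∀ z ∈ X, f z ∈ X := fun z hz => hf.1 hz
  set G : (ℤ → A) → ZMod m := fun z => (P (f z) : ZMod m) - (P z : ZMod m) with hG
  have hGstep : ∀ z ∈ X, G (shiftZ z) = G z := by
    intro z hz
    simp only [hG]
    rw [hf.2.2 z hz, hstepZ (f z) (hfX z hz), hstepZ z hz]
    ring
  have hGiter : ∀ z ∈ X, ∀ n : ℕ, shiftZ^[n] z ∈ X ∧ G (shiftZ^[n] z) = G z := by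
    intro z hz n
    induction n with
    | zero => exact ⟨hz, rfl⟩
    | succ n ih =>
      rw [Function.iterate_succ_apply']
      exact ⟨hsZ ih.1, by rw [hGstep _ ih.1, ih.2]⟩
  -- P determined by R on the window [0, m)
  have hPdet : ∀ z ∈ X, ∀ w ∈ X, (∀ i : ℕ, i < m → R z (i : ℤ) = R w (i : ℤ)) → P z = P w := by
    intro z hz w hw hzw
    have hz' : R z ((P z : ℕ) : ℤ) ≠ none :=
      (hR _ (hPlt z hz) z (hPmem z hz) _).2 (by simp)
    have hw' : R w ((P z : ℕ) : ℤ) ≠ none := by rw [← hzw _ (hPlt z hz)]; exact hz'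
    have hmod := (hR _ (hPlt w hw) w (hPmem w hw) _).1 hw'
    have hd : (m : ℤ) ∣ (((P z : ℕ) : ℤ) - ((P w : ℕ) : ℤ)) := Int.dvd_of_emod_eq_zero hmod
    have h1 := hPlt z hz
    have h2 := hPlt w hw
    have habs : |((P z : ℕ) : ℤ) - ((P w : ℕ) : ℤ)| < m := abs_lt.2 (by omega)
    have := Int.eq_zero_of_abs_lt_dvd hd habs
    omega
  -- local constancy of G
  have hRfcont : ContinuousOn (fun z => R (f z)) X := ContinuousOn.comp hRcont hf.2.1 hf.1
  have hGcont : ∀ x ∈ X, ∃ l : ℕ, ∀ y ∈ X, (∀ k : ℤ, k.natAbs ≤ l → y k = x k) → G y = G x := by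
    intro x hx
    have hc1 : ContinuousOn (fun z => (fun i : Fin m => R z ((i : ℕ) : ℤ))) X :=
      continuousOn_pi.2 fun i => (continuous_apply ((i : ℕ) : ℤ)).comp_continuousOn hRcont
    have hc2 : ContinuousOn (fun z => (fun i : Fin m => R (f z) ((i : ℕ) : ℤ))) X :=
      continuousOn_pi.2 fun i => (continuous_apply ((i : ℕ) : ℤ)).comp_continuousOn hRfcont
    obtain ⟨l, hl⟩ := locConst X
      (fun z => ((fun i : Fin m => R z ((i : ℕ) : ℤ)), (fun i : Fin m => R (f z) ((i : ℕ) : ℤ))))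
      (hc1.prodMk hc2) hx
    refine ⟨l, fun y hy ha => ?_⟩
    have heq := hl y hy ha
    have h1 : ∀ i : ℕ, i < m → R y (i : ℤ) = R x (i : ℤ) := fun i hi =>
      congrFun (congrArg Prod.fst heq) ⟨i, hi⟩
    have h2 : ∀ i : ℕ, i < m → R (f y) (i : ℤ) = R (f x) (i : ℤ) := fun i hi =>
      congrFun (congrArg Prod.snd heq) ⟨i, hi⟩
    have hp1 : P y = P x := hPdet y hy x hx h1
    have hp2 : P (f y) = P (f x) := hPdet (f y) (hfX y hy) (f x) (hfX x hx) h2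
    simp only [hG, hp1, hp2]
  -- minimality: G is constant on X
  have hGconst : ∀ x ∈ X, ∀ y ∈ X, G y = G x := by
    intro x hx y hy
    obtain ⟨l, hl⟩ := hGcont x hx
    have hx' : shiftZk (-(l : ℤ)) x ∈ X := hshift hx _
    obtain ⟨N, hN⟩ := hUR _ hx' (2 * l + 1)
    obtain ⟨i, hi0, hiN, hocc⟩ := hN y hy
    set n : ℕ := i.toNat + l with hn
    obtain ⟨hzX, hzG⟩ := hGiter y hy n
    rw [← hzG]
    apply hl _ hzX
    intro k hk
    rw [aux_iter]
    have hkl : (((k + l).toNat : ℕ) : ℤ) = k + l := Int.toNat_of_nonneg (by omega)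
    have h2 : (k + l).toNat < 2 * l + 1 := by omega
    have hocc' := hocc _ h2
    have hn' : ((n : ℕ) : ℤ) = i + l := by simp only [hn]; push_cast; omega
    calc y (k + ((n : ℕ) : ℤ)) = y (i + (((k + l).toNat : ℕ) : ℤ)) := by
          exact congrArg y (by rw [hkl, hn']; ring)
      _ = shiftZk (-(l : ℤ)) x (((k + l).toNat : ℕ) : ℤ) := hocc'
      _ = x k := congrArg x (by rw [hkl]; ring)
  -- conclusion
  by_cases hne : ∃ y₀, y₀ ∈ X0
  · obtain ⟨y₀, hy₀⟩ := hne
    have hmem0 : ∀ y, y ∈ X0 → y ∈ shiftZk ((0 : ℕ) : ℤ) '' X0 := by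
      intro y hy
      refine ⟨y, hy, ?_⟩
      funext nn; exact congrArg y (by push_cast; ring)
    have hy₀0 := hmem0 y₀ hy₀
    have hy₀X : y₀ ∈ X := hXp_sub 0 hm hy₀0
    refine ⟨P (f y₀), hPlt _ (hfX _ hy₀X), ?_⟩
    intro y hy
    have hy0 := hmem0 y hy
    have hyX : y ∈ X := hXp_sub 0 hm hy0
    have hPy : P y = 0 := hPuniq y hyX 0 hm hy0
    have hPy0 : P y₀ = 0 := hPuniq y₀ hy₀X 0 hm hy₀0
    have hGeq : G y = G y₀ := hGconst y₀ hy₀X y hyX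
    have hzmod : (P (f y) : ZMod m) = (P (f y₀) : ZMod m) := by
      simp only [hG, hPy, hPy0, Nat.cast_zero, sub_zero] at hGeq
      exact hGeq
    have hcast : P (f y) = P (f y₀) := by
      have h1 := ZMod.val_cast_of_lt (n := m) (hPlt _ (hfX _ hyX))
      have h2 := ZMod.val_cast_of_lt (n := m) (hPlt _ (hfX _ hy₀X))
      rw [← h1, ← h2, hzmod]
    rw [← hcast]
    exact hPmem _ (hfX _ hyX)
  · exact ⟨0, hm, fun y hy => absurd ⟨y, hy⟩ hne⟩
end

section
/- Let $\tau$ be the Thue–Morse substitution $0 \mapsto 01$, $1 \mapsto 10$ acting on its one-sided subshift $X_\tau$, and let $\tau^{-1}$ be its almost inverse dill map. Then for all $n \in \mathbb{N}$, $\tau^{-1} \circ \sigma^n \circ \tau = \sigma^{\lceil n/2 \rceil}$ as maps on $X_\tau$. -/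
open Filter Topology

/-- The Thue–Morse substitution `0 ↦ 01`, `1 ↦ 10` (on `Bool`). -/
def tmSub : Bool → List Bool := fun b => [b, !b]

/-- The action of the Thue–Morse substitution on one-sided configurations. -/
def tmApply (x : ℕ → Bool) : ℕ → Bool :=
  fun i => if i % 2 = 0 then x (i / 2) else !(x (i / 2))

/-- The implementation of the almost inverse of the Thue–Morse substitution:
it outputs the preimage letter at positions starting a `τ`-image, and `ε`
elsewhere (in-radius 4). -/
def tmInvImpl (x : ℕ → Bool) : List Bool :=
  if (x 0 = false ∧ x 1 = true ∧ x 2 = false ∧ x 3 = true ∧ x 4 = true) ∨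
     (x 0 = false ∧ x 1 = true ∧ x 2 = true ∧ x 3 = false ∧ x 4 = false) ∨
     (x 0 = false ∧ x 1 = true ∧ x 2 = true ∧ x 3 = false ∧ x 4 = true) ∨
     (x 0 = true ∧ x 1 = false ∧ x 2 = false ∧ x 3 = true ∧ x 4 = false) ∨
     (x 0 = true ∧ x 1 = false ∧ x 2 = false ∧ x 3 = true ∧ x 4 = true) ∨
     (x 0 = true ∧ x 1 = false ∧ x 2 = true ∧ x 3 = false ∧ x 4 = false)
  then [x 0] else []

section Aux

variable {A : Type*}

lemma shift_iter (y : ℕ → A) (m n : ℕ) : shift^[m] y n = y (m + n) := by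
  induction m generalizing y n with
  | zero => simp
  | succ m ih =>
    rw [Function.iterate_succ_apply, ih]
    show y (m + n + 1) = y (m + 1 + n)
    congr 1; omega

lemma mem_shift {τ : A → List A} {x : ℕ → A} (hx : x ∈ Xsub τ) : shift x ∈ Xsub τ := by
  intro i l
  have h := hx (i + 1) l
  have he : (List.ofFn fun k : Fin l => shift x (i + k)) =
      List.ofFn fun k : Fin l => x (i + 1 + k) := by
    congr 1; funext k; show x (i + k + 1) = x (i + 1 + k); congr 1; omega
  rwa [he]

lemma mem_shift_iter {τ : A → List A} {x : ℕ → A} (hx : x ∈ Xsub τ) (m : ℕ) :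
    shift^[m] x ∈ Xsub τ := by
  induction m with
  | zero => exact hx
  | succ m ih => rw [Function.iterate_succ_apply']; exact mem_shift ih

lemma InLanguage.mono {τ : A → List A} {w v : List A} (h : w <:+: v)
    (hv : InLanguage τ v) : InLanguage τ w := by
  obtain ⟨a, n, hn⟩ := hv
  exact ⟨a, n, h.trans hn⟩

lemma InLanguage.word {τ : A → List A} {w : List A} (h : InLanguage τ w) :
    InLanguage τ (wordApply τ w) := by
  obtain ⟨a, n, s, t, hst⟩ := h
  refine ⟨a, n + 1, wordApply τ s, wordApply τ t, ?_⟩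
  show _ = wordApply τ (subPow τ n a)
  rw [← hst]; simp [wordApply]

lemma tm_len (w : List Bool) : (wordApply tmSub w).length = 2 * w.length := by
  induction w with
  | nil => simp [wordApply]
  | cons a w ih => simp [wordApply, tmSub] at ih ⊢; omega

lemma tm_getD (w : List Bool) (j : ℕ) (hj : j < 2 * w.length) :
    (wordApply tmSub w).getD j false =
      if j % 2 = 0 then w.getD (j / 2) false else !(w.getD (j / 2) false) := by
  induction w generalizing j with
  | nil => simp at hj
  | cons a w ih =>
    have h2 : wordApply tmSub (a :: w) = a :: (!a) :: wordApply tmSub w := by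
      simp [wordApply, tmSub]
    match j with
    | 0 => simp [h2]
    | 1 => simp [h2]
    | (j + 2) =>
      rw [h2]
      simp only [List.getD_cons_succ]
      rw [ih j (by simp at hj; omega)]
      have e1 : (j + 2) % 2 = j % 2 := by omega
      have e2 : (j + 2) / 2 = j / 2 + 1 := by omega
      rw [e1, e2]
      simp only [List.getD_cons_succ]

lemma tm_pair (v : List Bool) (t : ℕ) (h : 2 * t + 1 < 2 * v.length) :
    (wordApply tmSub v).getD (2 * t) false ≠ (wordApply tmSub v).getD (2 * t + 1) false := by
  rw [tm_getD v (2 * t) (by omega), tm_getD v (2 * t + 1) h]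
  have e1 : (2 * t) % 2 = 0 := by omega
  have e2 : (2 * t) / 2 = t := by omega
  have e3 : (2 * t + 1) % 2 = 1 := by omega
  have e4 : (2 * t + 1) / 2 = t := by omega
  rw [e1, e2, e3, e4]
  simp

lemma tm_noTriple {x : ℕ → Bool} (hx : x ∈ Xsub tmSub) (k : ℕ) :
    ¬ (x k = x (k + 1) ∧ x (k + 1) = x (k + 2)) := by
  rintro ⟨h1, h2⟩
  have h := hx k 3
  have hw : (List.ofFn fun t : Fin 3 => x (k + t)) = [x k, x k, x k] := by
    simp only [List.ofFn_succ, List.ofFn_zero, Fin.val_zero, Fin.val_succ]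
    norm_num
    exact ⟨h1.symm, by rw [← h2, ← h1]⟩
  rw [hw] at h
  obtain ⟨a, n, hinf⟩ := h
  match n with
  | 0 =>
    have := hinf.length_le
    simp [subPow] at this
  | (m + 1) =>
    set v := subPow tmSub m a with hv
    have hW : subPow tmSub (m + 1) a = wordApply tmSub v := rfl
    rw [hW] at hinf
    obtain ⟨s, t, hst⟩ := hinf
    set W := wordApply tmSub v with hWdef
    set p := s.length with hp
    have hlen : p + 3 ≤ W.length := by
      rw [← hst]; simp; omega
    have hWlen : W.length = 2 * v.length := tm_len v
    have hget : ∀ i, i < 3 → W.getD (p + i) false = x k := by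
      intro i hi
      rw [← hst, List.append_assoc, List.getD_append_right _ _ _ _ (by omega),
        show p + i - p = i from by omega,
        List.getD_append _ _ _ _ (by simpa using hi)]
      interval_cases i <;> rfl
    rcases Nat.even_or_odd p with ⟨q, hq⟩ | ⟨q, hq⟩
    · have hp2 : p = 2 * q := by omega
      have := tm_pair v q (by omega)
      rw [← hp2] at this
      apply this
      have g0 : W.getD p false = x k := by
        have := hget 0 (by omega); rwa [Nat.add_zero] at this
      have g1 := hget 1 (by omega)
      rw [g0, g1]
    · have hp2 : p + 1 = 2 * (q + 1) := by omega
      have := tm_pair v (q + 1) (by omega)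
      rw [← hp2] at this
      apply this
      have g1 := hget 1 (by omega)
      have g2 := hget 2 (by omega)
      rw [show p + 1 + 1 = p + 2 by omega, g1, g2]

lemma tm_even (x : ℕ → Bool) (k : ℕ) : tmApply x (2 * k) = x k := by
  have h1 : (2 * k) % 2 = 0 := by omega
  have h2 : (2 * k) / 2 = k := by omega
  simp [tmApply, h1, h2]

lemma tm_odd (x : ℕ → Bool) (k : ℕ) : tmApply x (2 * k + 1) = !(x k) := by
  have h1 : (2 * k + 1) % 2 = 1 := by omega
  have h2 : (2 * k + 1) / 2 = k := by omega
  simp [tmApply, h1, h2]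

lemma tmApply_mem {x : ℕ → Bool} (hx : x ∈ Xsub tmSub) : tmApply x ∈ Xsub tmSub := by
  intro i l
  set m := i + l with hm
  set W := wordApply tmSub (List.ofFn fun k : Fin m => x k) with hW
  have hWlen : W.length = 2 * m := by rw [hW, tm_len]; simp
  have hWlang : InLanguage tmSub W := by
    apply InLanguage.word
    have := hx 0 m
    simpa using this
  have key : (List.ofFn fun k : Fin l => tmApply x (i + k)) = (W.drop i).take l := by
    apply List.ext_getElem
    · simp [hWlen]; omega
    · intro j h1 h2
      simp only [List.getElem_take, List.getElem_drop, List.getElem_ofFn]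
      have hij : i + j < 2 * m := by simp at h1; omega
      have hd : W[i + j]'(by omega) = W.getD (i + j) false :=
        (List.getD_eq_getElem W false (by omega)).symm
      rw [hd, hW, tm_getD _ _ (by simpa using hij)]
      have hq : (i + j) / 2 < m := by omega
      have hofn : (List.ofFn fun k : Fin m => x k).getD ((i + j) / 2) false = x ((i + j) / 2) := by
        rw [List.getD_eq_getElem _ false (by simpa using hq)]
        simp
      rw [hofn]
      rfl
  rw [key]
  exact InLanguage.mono (((W.drop i).take_prefix l).isInfix.trans
    ((W.drop_suffix i).isInfix)) hWlang

lemma impl_even {x : ℕ → Bool} (hx : x ∈ Xsub tmSub) (k : ℕ) :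
    tmInvImpl (shift^[2 * k] (tmApply x)) = [x k] := by
  have e : ∀ j, shift^[2 * k] (tmApply x) j = tmApply x (2 * k + j) :=
    fun j => shift_iter _ _ _
  have h0 : shift^[2 * k] (tmApply x) 0 = x k := by
    rw [e 0]; simpa using tm_even x k
  have h1 : shift^[2 * k] (tmApply x) 1 = !(x k) := by
    rw [e 1]; exact tm_odd x k
  have h2 : shift^[2 * k] (tmApply x) 2 = x (k + 1) := by
    rw [e 2, show 2 * k + 2 = 2 * (k + 1) by omega]; exact tm_even x (k + 1)
  have h3 : shift^[2 * k] (tmApply x) 3 = !(x (k + 1)) := by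
    rw [e 3, show 2 * k + 3 = 2 * (k + 1) + 1 by omega]; exact tm_odd x (k + 1)
  have h4 : shift^[2 * k] (tmApply x) 4 = x (k + 2) := by
    rw [e 4, show 2 * k + 4 = 2 * (k + 2) by omega]; exact tm_even x (k + 2)
  have hnt := tm_noTriple hx k
  unfold tmInvImpl
  rw [h0, h1, h2, h3, h4]
  cases hb : x k <;> cases hb1 : x (k + 1) <;> cases hb2 : x (k + 2) <;> simp_all

lemma impl_odd {x : ℕ → Bool} (hx : x ∈ Xsub tmSub) (k : ℕ) :
    tmInvImpl (shift^[2 * k + 1] (tmApply x)) = [] := by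
  have e : ∀ j, shift^[2 * k + 1] (tmApply x) j = tmApply x (2 * k + 1 + j) :=
    fun j => shift_iter _ _ _
  have h0 : shift^[2 * k + 1] (tmApply x) 0 = !(x k) := by
    rw [e 0]; simpa using tm_odd x k
  have h1 : shift^[2 * k + 1] (tmApply x) 1 = x (k + 1) := by
    rw [e 1, show 2 * k + 1 + 1 = 2 * (k + 1) by omega]; exact tm_even x (k + 1)
  have h2 : shift^[2 * k + 1] (tmApply x) 2 = !(x (k + 1)) := by
    rw [e 2, show 2 * k + 1 + 2 = 2 * (k + 1) + 1 by omega]; exact tm_odd x (k + 1)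
  have h3 : shift^[2 * k + 1] (tmApply x) 3 = x (k + 2) := by
    rw [e 3, show 2 * k + 1 + 3 = 2 * (k + 2) by omega]; exact tm_even x (k + 2)
  have h4 : shift^[2 * k + 1] (tmApply x) 4 = !(x (k + 2)) := by
    rw [e 4, show 2 * k + 1 + 4 = 2 * (k + 2) + 1 by omega]; exact tm_odd x (k + 2)
  unfold tmInvImpl
  rw [h0, h1, h2, h3, h4]
  cases hb : x k <;> cases hb1 : x (k + 1) <;> cases hb2 : x (k + 2) <;> simp_all

lemma main_even {Ψ : (ℕ → Bool) → (ℕ → Bool)}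
    (himpl : IsImplementation (Xsub tmSub) Ψ tmInvImpl)
    {x : ℕ → Bool} (hx : x ∈ Xsub tmSub) :
    ∀ n k : ℕ, Ψ (shift^[2 * k] (tmApply x)) n = x (k + n) := by
  have hmem : ∀ m, shift^[m] (tmApply x) ∈ Xsub tmSub :=
    fun m => mem_shift_iter (tmApply_mem hx) m
  have heq := himpl.2
  intro n
  induction n with
  | zero =>
    intro k
    have h := heq _ (hmem (2 * k)) 0
    rw [impl_even hx k] at h
    simpa using h
  | succ n ih =>
    intro k
    have h := heq _ (hmem (2 * k)) (n + 1)
    rw [impl_even hx k] at h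
    rw [dif_neg (show ¬ (n + 1 < [x k].length) by simp)] at h
    simp only [List.length_singleton, Nat.add_sub_cancel] at h
    rw [← Function.iterate_succ_apply' shift (2 * k)] at h
    simp only [Nat.succ_eq_add_one] at h
    have h2 := heq _ (hmem (2 * k + 1)) n
    rw [impl_odd hx k] at h2
    rw [dif_neg (show ¬ (n < ([] : List Bool).length) by simp)] at h2
    simp only [List.length_nil, Nat.sub_zero] at h2
    rw [← Function.iterate_succ_apply' shift (2 * k + 1)] at h2
    simp only [Nat.succ_eq_add_one] at h2
    rw [show 2 * k + 1 + 1 = 2 * (k + 1) by omega] at h2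
    rw [h, h2, ih (k + 1)]
    congr 1; omega

lemma main_odd {Ψ : (ℕ → Bool) → (ℕ → Bool)}
    (himpl : IsImplementation (Xsub tmSub) Ψ tmInvImpl)
    {x : ℕ → Bool} (hx : x ∈ Xsub tmSub) :
    ∀ n k : ℕ, Ψ (shift^[2 * k + 1] (tmApply x)) n = x (k + 1 + n) := by
  have hmem : ∀ m, shift^[m] (tmApply x) ∈ Xsub tmSub :=
    fun m => mem_shift_iter (tmApply_mem hx) m
  intro n k
  have h2 := himpl.2 _ (hmem (2 * k + 1)) n
  rw [impl_odd hx k] at h2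
  rw [dif_neg (show ¬ (n < ([] : List Bool).length) by simp)] at h2
  simp only [List.length_nil, Nat.sub_zero] at h2
  rw [← Function.iterate_succ_apply' shift (2 * k + 1)] at h2
  simp only [Nat.succ_eq_add_one] at h2
  rw [show 2 * k + 1 + 1 = 2 * (k + 1) by omega] at h2
  rw [h2, main_even himpl hx n (k + 1)]

end Aux

/-- for the Thue–Morse substitution `τ` and its almost inverse
dill map `τ⁻¹`, we have `τ⁻¹ ∘ σⁿ ∘ τ = σ^⌈n/2⌉` on `X_τ`. -/
theorem stmt16 (Ψ : (ℕ → Bool) → (ℕ → Bool))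
    (hdill : DillMap (Xsub tmSub) (Xsub tmSub) Ψ)
    (himpl : IsImplementation (Xsub tmSub) Ψ tmInvImpl) :
    ∀ n : ℕ, ∀ x ∈ Xsub tmSub,
      Ψ (shift^[n] (tmApply x)) = shift^[(n + 1) / 2] x := by
  intro n x hx
  funext m
  rcases Nat.even_or_odd n with ⟨k, hk⟩ | ⟨k, hk⟩
  · rw [show n = 2 * k by omega, main_even himpl hx m k, shift_iter]
    congr 1; omega
  · rw [show n = 2 * k + 1 by omega, main_odd himpl hx m k, shift_iter]
    congr 1; omega
end
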